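/- With the setup above and 0 < k < G, ε = 0, the normalized advantage of a correct response A⁺ = (1 − μ)/σ equals √((1−p)/p), and the normalized advantage of an incorrect response A⁻ = (−λ − μ)/σ equals −√(p/(1−p)); in particular both are independent of λ. -/
import Mathlib


theorem stmt_2 (G k : ℕ) (hG : 0 < G) (hk0 : 0 < k) (hkG : k < G) (l : ℝ) (hl : 0 < l)
    (p μ σ : ℝ) (hp : p = (k : ℝ) / G) (hμ : μ = (1 + l) * p - l)
    (hσ : σ = (1 + l) * Real.sqrt (p * (1 - p))) :
    (1 - μ) / σ = Real.sqrt ((1 - p) / p) ∧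
    (-l - μ) / σ = -Real.sqrt (p / (1 - p)) := by
  have hGpos : (0:ℝ) < G := by exact_mod_cast hG
  have hp0 : 0 < p := by
    rw [hp]; positivity
  have hp1 : p < 1 := by
    rw [hp, div_lt_one hGpos]; exact_mod_cast hkG
  have h1p : 0 < 1 - p := by linarith
  have hsp : Real.sqrt p > 0 := Real.sqrt_pos.mpr hp0
  have hs1p : Real.sqrt (1 - p) > 0 := Real.sqrt_pos.mpr h1p
  have hl1 : (0:ℝ) < 1 + l := by linarith
  have hmul : Real.sqrt (p * (1 - p)) = Real.sqrt p * Real.sqrt (1 - p) :=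
    Real.sqrt_mul hp0.le _
  have hpe : Real.sqrt p * Real.sqrt p = p := Real.mul_self_sqrt hp0.le
  have h1pe : Real.sqrt (1 - p) * Real.sqrt (1 - p) = 1 - p := Real.mul_self_sqrt h1p.le
  constructor
  · rw [hμ, hσ, hmul, Real.sqrt_div h1p.le]
    rw [div_eq_div_iff (by positivity) hsp.ne']
    linear_combination (-(1+l)*Real.sqrt p) * h1pe
  · rw [hμ, hσ, hmul, Real.sqrt_div hp0.le]
    rw [div_eq_iff (by positivity), neg_mul, ← neg_eq_iff_eq_neg]
    rw [div_mul_eq_mul_div, eq_div_iff (by positivity)]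
    linear_combination (-(1+l)*Real.sqrt (1-p)) * hpe
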